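/- arXiv:2410.15428 — 6 statements merged into one kernel-verified Lean document; each statement's English description precedes it below -/
import Mathlib

section
/- For positive integers M, N, m, n with m ≤ M and n ≤ N, the minimum number of colors needed for an (m,n)-distinguishable 2D color code on the M×N grid satisfies K_{M,N}(m,n) ≤ K_M(m) · K_N(n). -/
/-- The multiset of `m` consecutive elements of `s` starting at `t`. -/
def window {α : Type*} (s : ℕ → α) (m t : ℕ) : Multiset α :=
  (Multiset.range m).map (fun i => s (t + i))

/-- `s` is an `m`-distinguishable (non-cyclic) sequence of length `M`. -/
def IsDist {α : Type*} (M m : ℕ) (s : ℕ → α) : Prop :=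
  ∀ t₁ t₂, t₁ + m ≤ M → t₂ + m ≤ M → window s m t₁ = window s m t₂ → t₁ = t₂

/-- The color multiset of the `m × n` block tagged at `(x₀, y₀)`. -/
def block {α : Type*} (f : ℕ → ℕ → α) (m n x₀ y₀ : ℕ) : Multiset α :=
  (Multiset.range m).bind (fun i => (Multiset.range n).map (fun j => f (x₀ + i) (y₀ + j)))

/-- A 2D color mapping is `(m,n)`-distinguishable on the `M × N` grid. -/
def IsDist2 {α : Type*} (M N m n : ℕ) (f : ℕ → ℕ → α) : Prop :=
  ∀ x₁ y₁ x₂ y₂, x₁ + m ≤ M → y₁ + n ≤ N → x₂ + m ≤ M → y₂ + n ≤ N →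
    block f m n x₁ y₁ = block f m n x₂ y₂ → (x₁, y₁) = (x₂, y₂)

/-- `K_M(m)`: the minimum number of colors admitting an `m`-distinguishable
coloring of the 1D grid `Z_M`. -/
noncomputable def K1 (M m : ℕ) : ℕ := sInf {k | ∃ s : ℕ → Fin k, IsDist M m s}

/-- `K_{M,N}(m,n)`: the minimum number of colors admitting an
`(m,n)`-distinguishable coloring of the grid `Z_M × Z_N`. -/
noncomputable def K2 (M N m n : ℕ) : ℕ :=
  sInf {k | ∃ f : ℕ → ℕ → Fin k, IsDist2 M N m n f}

lemma aux_bind_replicate {α β : Type*} (n : ℕ) (g : β → α) (r : Multiset β) :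
    r.bind (fun i => Multiset.replicate n (g i)) = n • r.map g := by
  induction r using Multiset.induction with
  | empty => simp
  | cons a s ih =>
      simp [Multiset.cons_bind, ih, Multiset.nsmul_cons, Multiset.nsmul_singleton]

lemma aux_bind_const {α β : Type*} (c : Multiset α) (r : Multiset β) :
    r.bind (fun _ => c) = Multiset.card r • c := by
  induction r using Multiset.induction with
  | empty => simp
  | cons a s ih =>
      simp only [Multiset.cons_bind, ih, Multiset.card_cons]
      rw [add_comm (Multiset.card s) 1, add_smul, one_smul]

lemma nsmul_cancel {α : Type*} [DecidableEq α] {n : ℕ} (hn : 0 < n)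
    {s t : Multiset α} (h : n • s = n • t) : s = t := by
  ext a
  have := congrArg (Multiset.count a) h
  rw [Multiset.count_nsmul, Multiset.count_nsmul] at this
  exact Nat.eq_of_mul_eq_mul_left hn this

/-- The 1D existence witness: `K1` sets are nonempty. -/
lemma K1_nonempty (M m : ℕ) (hm : 0 < m) (hmM : m ≤ M) :
    {k | ∃ s : ℕ → Fin k, IsDist M m s}.Nonempty := by
  have hM : 0 < M := lt_of_lt_of_le hm hmM
  refine ⟨M, ⟨fun i => ⟨min i (M - 1), lt_of_le_of_lt (min_le_right _ _) (Nat.sub_lt hM one_pos)⟩, ?_⟩⟩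
  intro t₁ t₂ h₁ h₂ hw
  have key : ∀ t₁ t₂ : ℕ, t₁ + m ≤ M → t₂ + m ≤ M →
      window (fun i => (⟨min i (M - 1), lt_of_le_of_lt (min_le_right _ _) (Nat.sub_lt hM one_pos)⟩ : Fin M)) m t₁ =
      window (fun i => (⟨min i (M - 1), lt_of_le_of_lt (min_le_right _ _) (Nat.sub_lt hM one_pos)⟩ : Fin M)) m t₂ →
      t₂ ≤ t₁ := by
    intro a b ha hb hab
    have hmem : (⟨min a (M - 1), lt_of_le_of_lt (min_le_right _ _) (Nat.sub_lt hM one_pos)⟩ : Fin M) ∈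
        window (fun i => (⟨min i (M - 1), lt_of_le_of_lt (min_le_right _ _) (Nat.sub_lt hM one_pos)⟩ : Fin M)) m a := by
      unfold window
      rw [Multiset.mem_map]
      exact ⟨0, by simpa using hm, by simp⟩
    rw [hab] at hmem
    unfold window at hmem
    rw [Multiset.mem_map] at hmem
    obtain ⟨j, hj, hje⟩ := hmem
    rw [Multiset.mem_range] at hj
    have hvals : min (b + j) (M - 1) = min a (M - 1) := congrArg Fin.val hje
    have h1 : b + j ≤ M - 1 := by omega
    have h2 : a ≤ M - 1 := by omega
    rw [min_eq_left h1, min_eq_left h2] at hvals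
    omega
  exact le_antisymm (key t₂ t₁ h₂ h₁ hw.symm) (key t₁ t₂ h₁ h₂ hw)

lemma block_map {α β : Type*} (f : ℕ → ℕ → α) (g : α → β) (m n x y : ℕ) :
    (block f m n x y).map g = block (fun i j => g (f i j)) m n x y := by
  simp [block, Multiset.map_bind, Multiset.map_map, Function.comp]

lemma block_fst {α β : Type*} (s : ℕ → α) (t : ℕ → β) (m n x y : ℕ) :
    (block (fun i j => (s i, t j)) m n x y).map Prod.fst = n • window s m x := by
  rw [block_map]
  show (Multiset.range m).bind (fun i => (Multiset.range n).map (fun _ => s (x + i))) = _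
  have : ∀ i : ℕ, (Multiset.range n).map (fun _ => s (x + i)) = Multiset.replicate n (s (x + i)) := by
    intro i; simp [Multiset.map_const']
  simp only [this]
  rw [aux_bind_replicate]
  rfl

lemma block_snd {α β : Type*} (s : ℕ → α) (t : ℕ → β) (m n x y : ℕ) :
    (block (fun i j => (s i, t j)) m n x y).map Prod.snd = m • window t n y := by
  rw [block_map]
  show (Multiset.range m).bind (fun _ => (Multiset.range n).map (fun j => t (y + j))) = _
  rw [aux_bind_const]
  simp [window]

/-- `K_{M,N}(m,n) ≤ K_M(m) · K_N(n)` for `m ≤ M`, `n ≤ N`. -/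
theorem stmt6 (M N m n : ℕ) (hm : 0 < m) (hn : 0 < n) (hmM : m ≤ M) (hnN : n ≤ N) :
    K2 M N m n ≤ K1 M m * K1 N n := by
  obtain ⟨s, hs⟩ : K1 M m ∈ {k | ∃ s : ℕ → Fin k, IsDist M m s} :=
    Nat.sInf_mem (K1_nonempty M m hm hmM)
  obtain ⟨t, ht⟩ : K1 N n ∈ {k | ∃ s : ℕ → Fin k, IsDist N n s} :=
    Nat.sInf_mem (K1_nonempty N n hn hnN)
  apply Nat.sInf_le
  refine ⟨fun x y => finProdFinEquiv (s x, t y), ?_⟩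
  intro x₁ y₁ x₂ y₂ hx₁ hy₁ hx₂ hy₂ hb
  set g : ℕ → ℕ → Fin (K1 M m) × Fin (K1 N n) := fun x y => (s x, t y) with hg
  have hb' : block g m n x₁ y₁ = block g m n x₂ y₂ := by
    have := congrArg (Multiset.map (finProdFinEquiv.symm :
      Fin (K1 M m * K1 N n) → Fin (K1 M m) × Fin (K1 N n))) hb
    rw [block_map, block_map] at this
    simpa [hg] using this
  have hfst := congrArg (Multiset.map (Prod.fst : _ → Fin (K1 M m))) hb'
  have hsnd := congrArg (Multiset.map (Prod.snd : _ → Fin (K1 N n))) hb'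
  rw [block_fst, block_fst] at hfst
  rw [block_snd, block_snd] at hsnd
  have hx := hs x₁ x₂ hx₁ hx₂ (nsmul_cancel hn hfst)
  have hy := ht y₁ y₂ hy₁ hy₂ (nsmul_cancel hm hsnd)
  simp [hx, hy]
end

section
/- Let p be a prime and k a positive integer divisible by p. Then the maximum length of a cyclic p-distinguishable sequence over [k] satisfies M_p^c(k) ≤ C(k+p-1, p) − k/p. -/
/-- The multiset of `m` cyclically consecutive elements (indices mod `M`). -/
def cwindow {α : Type*} (s : ℕ → α) (M m t : ℕ) : Multiset α :=
  (Multiset.range m).map (fun i => s ((t + i) % M))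

/-- `s` is a cyclic `m`-distinguishable sequence of length `M`. -/
def IsCyclicDist {α : Type*} (M m : ℕ) (s : ℕ → α) : Prop :=
  ∀ t₁ t₂, t₁ < M → t₂ < M → cwindow s M m t₁ = cwindow s M m t₂ → t₁ = t₂

/-- Summing a function over a cyclically shifted index range. -/
lemma sum_shift_mod (M i : ℕ) (g : ℕ → ℕ) :
    ∑ t ∈ Finset.range M, g ((t + i) % M) = ∑ t ∈ Finset.range M, g t := by
  rcases Nat.eq_zero_or_pos M with h | h
  · simp [h]
  have hinj : ∀ t₁ ∈ Finset.range M, ∀ t₂ ∈ Finset.range M,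
      (t₁ + i) % M = (t₂ + i) % M → t₁ = t₂ := by
    intro t₁ h₁ t₂ h₂ he
    have : t₁ ≡ t₂ [MOD M] := Nat.ModEq.add_right_cancel' i he
    rw [Finset.mem_range] at h₁ h₂
    rwa [Nat.ModEq, Nat.mod_eq_of_lt h₁, Nat.mod_eq_of_lt h₂] at this
  have himg : (Finset.range M).image (fun t => (t + i) % M) = Finset.range M := by
    apply Finset.eq_of_subset_of_card_le
    · intro j hj
      rw [Finset.mem_image] at hj
      obtain ⟨t, _, rfl⟩ := hj
      exact Finset.mem_range.2 (Nat.mod_lt _ h)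
    · rw [Finset.card_image_of_injOn hinj]
  conv_rhs => rw [← himg]
  rw [Finset.sum_image hinj]

/-- The count of `a` in all multisets of size `p` over `Fin k` sums to `C(k+p-1, p-1)`. -/
lemma sum_count_univ_sym (k p : ℕ) (hk : 0 < k) (hp : 0 < p) (a : Fin k) :
    ∑ m : Sym (Fin k) p, Multiset.count a (m : Multiset (Fin k))
      = (k + p - 1).choose (p - 1) := by
  classical
  -- the sum is independent of `a`
  have hindep : ∀ b : Fin k,
      ∑ m : Sym (Fin k) p, Multiset.count b (m : Multiset (Fin k))
        = ∑ m : Sym (Fin k) p, Multiset.count a (m : Multiset (Fin k)) := by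
    intro b
    have := Equiv.sum_comp (Sym.equivCongr (Equiv.swap a b) : Sym (Fin k) p ≃ Sym (Fin k) p)
      (fun m => Multiset.count b (m : Multiset (Fin k)))
    rw [← this]
    apply Finset.sum_congr rfl
    intro m _
    have : ((Sym.equivCongr (Equiv.swap a b) m : Sym (Fin k) p) : Multiset (Fin k))
        = Multiset.map (Equiv.swap a b) (m : Multiset (Fin k)) := by
      simp [Sym.equivCongr, Sym.coe_map]
    rw [this]
    have := Multiset.count_map_eq_count' (Equiv.swap a b) (m : Multiset (Fin k))
      (Equiv.injective _) a
    rwa [Equiv.swap_apply_left] at this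
  -- sum over all `a` gives `p * N`
  have hsumall : ∑ b : Fin k, ∑ m : Sym (Fin k) p, Multiset.count b (m : Multiset (Fin k))
      = (Fintype.card (Sym (Fin k) p)) * p := by
    rw [Finset.sum_comm]
    have hptm : ∀ m : Sym (Fin k) p, ∑ b : Fin k, Multiset.count b (m : Multiset (Fin k)) = p := by
      intro m
      have hsub : (m : Multiset (Fin k)).toFinset ⊆ Finset.univ := Finset.subset_univ _
      have := Finset.sum_subset hsub (fun x _ hx =>
        Multiset.count_eq_zero.2 (fun hmem => hx (Multiset.mem_toFinset.2 hmem)))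
      rw [← this, Multiset.toFinset_sum_count_eq]; exact m.2
    rw [Finset.sum_congr rfl (fun m _ => hptm m), Finset.sum_const, Finset.card_univ, smul_eq_mul]
  have hk' : ∑ b : Fin k, ∑ m : Sym (Fin k) p, Multiset.count b (m : Multiset (Fin k))
      = k * ∑ m : Sym (Fin k) p, Multiset.count a (m : Multiset (Fin k)) := by
    rw [Finset.sum_congr rfl (fun b _ => hindep b), Finset.sum_const, Finset.card_univ,
      Fintype.card_fin, smul_eq_mul]
  -- now use `card (Sym (Fin k) p) = C(k+p-1, p)` and the absorption identity
  have hcard : Fintype.card (Sym (Fin k) p) = (k + p - 1).choose p := by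
    rw [Sym.card_sym_eq_choose, Fintype.card_fin]
  have habs : (k + p - 1).choose p * p = k * ((k + p - 1).choose (p - 1)) := by
    have := Nat.choose_succ_right_eq (k + p - 1) (p - 1)
    have hpp : p - 1 + 1 = p := by omega
    rw [hpp] at this
    have hsub : k + p - 1 - (p - 1) = k := by omega
    rw [this, hsub, Nat.mul_comm]
  apply Nat.eq_of_mul_eq_mul_left hk
  rw [← hk', hsumall, hcard, habs]

/-- Lucas: `C(k+p-1, p-1) ≡ 1 (mod p)` when `p` is prime and `p ∣ k`. -/
lemma choose_mod_eq_one (p k : ℕ) (hp : p.Prime) (hk : 0 < k) (hdvd : p ∣ k) :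
    (k + p - 1).choose (p - 1) % p = 1 % p := by
  haveI : Fact p.Prime := ⟨hp⟩
  have hp1 : 1 ≤ p := hp.one_lt.le
  have h := Choose.choose_modEq_choose_mod_mul_choose_div_nat
    (p := p) (n := k + p - 1) (k := p - 1)
  obtain ⟨k', rfl⟩ := hdvd
  have h1 : (p * k' + p - 1) % p = p - 1 := by
    have : p * k' + p - 1 = p * k' + (p - 1) := by omega
    rw [this, Nat.mul_add_mod]
    exact Nat.mod_eq_of_lt (by omega)
  have h2 : (p * k' + p - 1) / p = k' := by
    have : p * k' + p - 1 = p * k' + (p - 1) := by omega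
    rw [this, Nat.mul_add_div hp.pos, Nat.div_eq_of_lt (by omega)]
    omega
  have h3 : (p - 1) % p = p - 1 := Nat.mod_eq_of_lt (by omega)
  have h4 : (p - 1) / p = 0 := Nat.div_eq_of_lt (by omega)
  rw [h1, h2, h3, h4, Nat.choose_self, Nat.choose_zero_right, Nat.mul_one] at h
  exact h

/-- If `p` is prime and `p ∣ k`, then any cyclic `p`-distinguishable sequence
over `[k]` has length at most `C(k+p-1, p) - k/p`; i.e.
`M_p^c(k) ≤ C(k+p-1, p) - k/p`. -/
theorem stmt7 (p k M : ℕ) (hp : p.Prime) (hk : 0 < k) (hdvd : p ∣ k)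
    (s : ℕ → Fin k) (hS : IsCyclicDist M p s) :
    M ≤ (k + p - 1).choose p - k / p := by
  classical
  have hp0 : 0 < p := hp.pos
  -- windows as elements of `Sym (Fin k) p`
  have hcard : ∀ t, Multiset.card (cwindow s M p t) = p := by
    intro t; simp [cwindow]
  set f : ℕ → Sym (Fin k) p := fun t => ⟨cwindow s M p t, hcard t⟩ with hf
  set W : Finset (Sym (Fin k) p) := (Finset.range M).image f with hW
  have hfinj : ∀ t₁ ∈ Finset.range M, ∀ t₂ ∈ Finset.range M, f t₁ = f t₂ → t₁ = t₂ := by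
    intro t₁ h₁ t₂ h₂ he
    exact hS t₁ t₂ (Finset.mem_range.1 h₁) (Finset.mem_range.1 h₂) (congrArg Subtype.val he)
  have hWcard : W.card = M := by
    rw [hW, Finset.card_image_of_injOn hfinj, Finset.card_range]
  -- counting occurrences of each `a` over the windows
  have hcount : ∀ a : Fin k, ∀ t : ℕ,
      Multiset.count a (cwindow s M p t)
        = ∑ i ∈ Finset.range p, if a = s ((t + i) % M) then 1 else 0 := by
    intro a t
    rw [cwindow, Multiset.count_map]
    have h1 : (Multiset.range p) = (Finset.range p).val := rfl
    rw [h1, ← Finset.filter_val]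
    change ((Finset.range p).filter _).card = _
    exact Finset.card_filter _ _
  -- total count of `a` over the distinct windows
  set n : Fin k → ℕ := fun a => ∑ t ∈ Finset.range M, (if a = s t then 1 else 0) with hn
  have hWsum : ∀ a : Fin k, ∑ m ∈ W, Multiset.count a (m : Multiset (Fin k)) = p * n a := by
    intro a
    rw [hW, Finset.sum_image hfinj]
    have : ∀ t ∈ Finset.range M,
        Multiset.count a ((f t : Sym (Fin k) p) : Multiset (Fin k))
          = ∑ i ∈ Finset.range p, if a = s ((t + i) % M) then 1 else 0 := by
      intro t _
      exact hcount a t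
    rw [Finset.sum_congr rfl this, Finset.sum_comm]
    have hshift : ∀ i ∈ Finset.range p,
        (∑ t ∈ Finset.range M, if a = s ((t + i) % M) then 1 else 0) = n a := by
      intro i _
      exact sum_shift_mod M i (fun j => if a = s j then 1 else 0)
    rw [Finset.sum_congr rfl hshift, Finset.sum_const, Finset.card_range, smul_eq_mul]
  -- every element appears in some missing multiset
  have hmiss : ∀ a : Fin k, 1 ≤ ∑ m ∈ Wᶜ, Multiset.count a (m : Multiset (Fin k)) := by
    intro a
    set D := ∑ m ∈ Wᶜ, Multiset.count a (m : Multiset (Fin k)) with hD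
    have htot : p * n a + D = (k + p - 1).choose (p - 1) := by
      rw [← hWsum a, ← sum_count_univ_sym k p hk hp0 a]
      exact Finset.sum_add_sum_compl W _
    have hmod : D % p = 1 % p := by
      have h1 : (p * n a + D) % p = D % p := Nat.mul_add_mod _ _ _
      rw [htot] at h1
      rw [← h1, choose_mod_eq_one p k hp hk hdvd]
    have h2 : (1 : ℕ) % p = 1 := Nat.mod_eq_of_lt hp.one_lt
    rcases Nat.eq_zero_or_pos D with h | h
    · rw [h, Nat.zero_mod, h2] at hmod; omega
    · exact h
  -- hence at least `k / p` multisets are missing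
  have hsumc : ∀ m : Sym (Fin k) p,
      ∑ b : Fin k, Multiset.count b (m : Multiset (Fin k)) = p := by
    intro m
    have hsub : (m : Multiset (Fin k)).toFinset ⊆ Finset.univ := Finset.subset_univ _
    have := Finset.sum_subset hsub (fun x _ hx =>
      Multiset.count_eq_zero.2 (fun hmem => hx (Multiset.mem_toFinset.2 hmem)))
    rw [← this, Multiset.toFinset_sum_count_eq]; exact m.2
  have hklecompl : k ≤ Wᶜ.card * p := by
    have h1 : (k : ℕ) = ∑ _a : Fin k, 1 := by
      rw [Finset.sum_const, Finset.card_univ, Fintype.card_fin, smul_eq_mul, Nat.mul_one]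
    have h2 : ∑ a : Fin k, ∑ m ∈ Wᶜ, Multiset.count a (m : Multiset (Fin k))
        = Wᶜ.card * p := by
      rw [Finset.sum_comm, Finset.sum_congr rfl (fun m _ => hsumc m), Finset.sum_const,
        smul_eq_mul]
    calc k = ∑ _a : Fin k, 1 := h1
      _ ≤ ∑ a : Fin k, ∑ m ∈ Wᶜ, Multiset.count a (m : Multiset (Fin k)) :=
          Finset.sum_le_sum (fun a _ => hmiss a)
      _ = Wᶜ.card * p := h2
  have hdivle : k / p ≤ Wᶜ.card := by
    rw [Nat.div_le_iff_le_mul_add_pred hp0, Nat.mul_comm]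
    omega
  have hcompl : W.card + Wᶜ.card = (k + p - 1).choose p := by
    rw [Finset.card_add_card_compl, Sym.card_sym_eq_choose, Fintype.card_fin]
  omega
end

section
/- Let p be a prime, k divisible by p, and fix a color a ∈ [k]. Then the total number of occurrences of a, counted with multiplicity, over all multisets of size p from [k] that contain at least one a, is not divisible by p. -/
lemma sum_count_sym (k : ℕ) (hk : 0 < k) (a : Fin k) (n : ℕ) :
    ∑ A : Sym (Fin k) n, Multiset.count a (A : Multiset (Fin k)) = (k - 1 + n).choose k := by
  induction n with
  | zero =>
    rw [Nat.add_zero, Nat.choose_eq_zero_of_lt (Nat.sub_lt hk one_pos)]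
    refine Finset.sum_eq_zero fun A _ => ?_
    rw [Multiset.count_eq_zero]
    intro h
    rw [Sym.mem_coe, Sym.eq_nil_of_card_zero A] at h
    exact Sym.notMem_nil a h
  | succ n ih =>
    have hfil : ∑ A ∈ Finset.univ.filter (fun A : Sym (Fin k) (n+1) => a ∈ A),
        Multiset.count a (A : Multiset (Fin k))
        = ∑ A : Sym (Fin k) (n+1), Multiset.count a (A : Multiset (Fin k)) :=
      Finset.sum_filter_of_ne (fun A _ h => by
        rwa [← Sym.mem_coe, ← Multiset.count_pos, Nat.pos_iff_ne_zero])
    rw [← hfil]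
    have key : ∑ A ∈ Finset.univ.filter (fun A : Sym (Fin k) (n+1) => a ∈ A),
        Multiset.count a (A : Multiset (Fin k))
        = ∑ B : Sym (Fin k) n, (Multiset.count a (B : Multiset (Fin k)) + 1) := by
      refine Finset.sum_bij' (fun A hA => A.erase a (Finset.mem_filter.mp hA).2)
        (fun B _ => a ::ₛ B) (fun A hA => Finset.mem_univ _)
        (fun B _ => Finset.mem_filter.mpr ⟨Finset.mem_univ _, Sym.mem_cons_self a B⟩)
        (fun A hA => Sym.cons_erase _) (fun B _ => Sym.erase_cons_head B a) ?_
      intro A hA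
      conv_lhs => rw [← Sym.cons_erase (Finset.mem_filter.mp hA).2]
      rw [Sym.coe_cons, Multiset.count_cons_self]
    rw [key, Finset.sum_add_distrib, ih, Finset.sum_const, Finset.card_univ, smul_eq_mul,
      mul_one, Sym.card_sym_eq_choose, Fintype.card_fin]
    obtain ⟨K, rfl⟩ : ∃ K, k = K + 1 := ⟨k - 1, (Nat.succ_pred_eq_of_pos hk).symm⟩
    rw [show K + 1 + n - 1 = K + n by omega, show K + 1 - 1 + (n + 1) = (K + n) + 1 by omega,
      show K + 1 - 1 + n = K + n by omega, Nat.choose_succ_succ, Nat.add_comm]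
    congr 1
    rw [← Nat.choose_symm (Nat.le_add_left n K)]
    congr 1
    omega

/-- Let `p` be a prime, `k` divisible by `p`, and `a` a color in `[k]`. The total
number of occurrences of `a`, counted with multiplicity, over all multisets of
size `p` from `[k]` containing at least one `a`, is not divisible by `p`. -/
theorem stmt8 (p k : ℕ) (hp : p.Prime) (hk : 0 < k) (hdvd : p ∣ k) (a : Fin k) :
    ¬ (p ∣ ∑ A ∈ Finset.univ.filter (fun A : Sym (Fin k) p => a ∈ A),
        Multiset.count a (A : Multiset (Fin k))) := by
  have hfil : ∑ A ∈ Finset.univ.filter (fun A : Sym (Fin k) p => a ∈ A),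
      Multiset.count a (A : Multiset (Fin k))
      = ∑ A : Sym (Fin k) p, Multiset.count a (A : Multiset (Fin k)) :=
    Finset.sum_filter_of_ne (fun A _ h => by
      rwa [← Sym.mem_coe, ← Multiset.count_pos, Nat.pos_iff_ne_zero])
  rw [hfil, sum_count_sym k hk a p]
  obtain ⟨m, rfl⟩ := hdvd
  haveI : Fact p.Prime := ⟨hp⟩
  have hp1 : 1 < p := hp.one_lt
  have hm : 0 < m := by
    rcases Nat.eq_zero_or_pos m with h | h
    · simp [h] at hk
    · exact h
  have hL := Choose.choose_modEq_choose_mod_mul_choose_div_nat (p := p) (n := p * m - 1 + p)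
    (k := p * m)
  have e1 : p * m - 1 + p = p * m + (p - 1) := by omega
  have e2 : (p * m + (p - 1)) % p = p - 1 := by
    rw [Nat.mul_add_mod, Nat.mod_eq_of_lt (by omega)]
  have e3 : (p * m + (p - 1)) / p = m := by
    rw [Nat.mul_add_div (by omega), Nat.div_eq_of_lt (by omega), Nat.add_zero]
  have e4 : p * m % p = 0 := Nat.mul_mod_right p m
  have e5 : p * m / p = m := Nat.mul_div_cancel_left m (by omega)
  rw [e1, e2, e3, e4, e5, Nat.choose_zero_right, Nat.choose_self, Nat.one_mul] at hL
  intro hdc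
  rw [e1] at hdc
  have h0 : (p * m + (p - 1)).choose (p * m) ≡ 0 [MOD p] :=
    (Nat.modEq_zero_iff_dvd).mpr hdc
  have : (0 : ℕ) ≡ 1 [MOD p] := h0.symm.trans hL
  have := this.symm
  rw [Nat.ModEq, Nat.mod_eq_of_lt hp1, Nat.zero_mod] at this
  omega
end

section
/- Let S be a cyclic m_1-distinguishable sequence of length M_1 over color set [k_1], and T a cyclic m_2-distinguishable sequence of length M_2 over a disjoint color set of size k_2. Suppose m_1 | M_1, m_2 | M_2, d = gcd(M_1/m_1, M_2/m_2) ≥ 2, and gcd(d, M_i/(m_i d)) = 1 for i = 1,2. Divide S into M_1/m_1 consecutive blocks α_0,...,α_{M_1/m_1 - 1} of length m_1 and T into M_2/m_2 blocks β_0,...,β_{M_2/m_2 - 1} of length m_2. Then the interleaved sequence S×T = α_0 β_0 α_1 β_1 ... α_{L-1} β_{L-1}, with block indices taken modulo M_1/m_1 and M_2/m_2 respectively and L = lcm(M_1/m_1, M_2/m_2), is a cyclic (m_1+m_2)-distinguishable sequence of length (m_1+m_2)L = (M_1 M_2 / d)(1/m_1 + 1/m_2) over k_1 + k_2 colors. 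-/
/-- The cross product `S × T`: the `q`-th element belongs to the `q/(m₁+m₂)`-th
pair of an `α`-word (a length-`m₁` block of `S`) followed by a `β`-word
(a length-`m₂` block of `T`), with block indices taken cyclically. -/
def crossProd {k₁ k₂ : ℕ} (S : ℕ → Fin k₁) (T : ℕ → Fin k₂)
    (M₁ M₂ m₁ m₂ : ℕ) : ℕ → (Fin k₁ ⊕ Fin k₂) := fun q =>
  if q % (m₁ + m₂) < m₁ then
    Sum.inl (S ((q / (m₁ + m₂) * m₁ + q % (m₁ + m₂)) % M₁))
  else
    Sum.inr (T ((q / (m₁ + m₂) * m₂ + (q % (m₁ + m₂) - m₁)) % M₂))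

private lemma rot (n b : ℕ) :
    (Multiset.range n).map (fun i => (b + i) % n) = Multiset.range n := by
  rcases Nat.eq_zero_or_pos n with h | hn
  · subst h; simp
  refine (Multiset.Nodup.ext ?_ (Multiset.nodup_range n)).mpr ?_
  · refine Multiset.Nodup.map_on ?_ (Multiset.nodup_range n)
    intro x hx y hy hxy
    simp only [Multiset.mem_range] at hx hy
    have h2 : Nat.ModEq n (b + x) (b + y) := hxy
    have h3 := Nat.ModEq.add_left_cancel' b h2
    have h4 : x % n = y % n := h3
    rwa [Nat.mod_eq_of_lt hx, Nat.mod_eq_of_lt hy] at h4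
  · intro a
    simp only [Multiset.mem_map, Multiset.mem_range]
    constructor
    · rintro ⟨i, _, rfl⟩; exact Nat.mod_lt _ hn
    · intro ha
      have h1 : b % n < n := Nat.mod_lt _ hn
      rcases le_or_gt (b % n) a with hba | hba
      · refine ⟨a - b % n, by omega, ?_⟩
        calc (b + (a - b % n)) % n = (b % n + (a - b % n) % n) % n := Nat.add_mod _ _ _
          _ = (b % n + (a - b % n)) % n := by
                rw [Nat.mod_eq_of_lt (show a - b % n < n by omega)]
          _ = a % n := by rw [Nat.add_sub_cancel' hba]
          _ = a := Nat.mod_eq_of_lt ha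
      · refine ⟨a + n - b % n, by omega, ?_⟩
        calc (b + (a + n - b % n)) % n = (b % n + (a + n - b % n) % n) % n := Nat.add_mod _ _ _
          _ = (b % n + (a + n - b % n)) % n := by
                rw [Nat.mod_eq_of_lt (show a + n - b % n < n by omega)]
          _ = (a + n) % n := by congr 1; omega
          _ = a := by rw [Nat.add_mod_right, Nat.mod_eq_of_lt ha]

private lemma window_shift {α : Type*} (s : ℕ → α) (M B n b : ℕ) (hb : b ≤ n) :
    (Multiset.range n).map (fun c => s ((B + c + if c < b then n else 0) % M)) =
    (Multiset.range n).map (fun i => s ((B + b + i) % M)) := by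
  conv_lhs => rw [← rot n b, Multiset.map_map]
  refine Multiset.map_congr rfl ?_
  intro i hi
  simp only [Multiset.mem_range] at hi
  simp only [Function.comp_apply]
  rcases Nat.lt_or_ge (b + i) n with h | h
  · rw [Nat.mod_eq_of_lt h, if_neg (by omega)]
    congr 2
    omega
  · have h2 : (b + i) % n = b + i - n := by
      rw [Nat.mod_eq_sub_mod h, Nat.mod_eq_of_lt (by omega)]
    rw [h2, if_pos (by omega)]
    congr 2
    omega

private lemma cwindow_mod {α : Type*} (s : ℕ → α) (M m t : ℕ) :
    cwindow s M m t = cwindow s M m (t % M) := by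
  unfold cwindow
  refine Multiset.map_congr rfl fun i _ => ?_
  rw [Nat.mod_add_mod]

private lemma idx_eq (L n m' j' c M : ℕ) (hL : n ∣ L) (hM : M = m' * n) :
    ((j' % L) * m' + c) % M = (j' * m' + c) % M := by
  have e1 : j' % L ≡ j' [MOD n] := (Nat.mod_modEq j' L).of_dvd hL
  have e2 := (e1.mul_right' m').add_right c
  have hM' : M = n * m' := by rw [hM, mul_comm]
  rw [hM']
  exact e2

private lemma fMap_add {α β : Type*} (f : α → Option β) (s t : Multiset α) :
    (s + t).filterMap f = s.filterMap f + t.filterMap f := by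
  induction s using Multiset.induction with
  | empty => simp
  | cons a s ih =>
    rcases h : f a with _ | b
    · rw [Multiset.cons_add, Multiset.filterMap_cons_none _ _ h,
        Multiset.filterMap_cons_none _ _ h, ih]
    · rw [Multiset.cons_add, Multiset.filterMap_cons_some _ _ _ h,
        Multiset.filterMap_cons_some _ _ _ h, ih, Multiset.cons_add]

private lemma fMap_none {γ δ : Type*} (Y : Multiset γ) :
    Y.filterMap (fun _ => (none : Option δ)) = 0 := by
  induction Y using Multiset.induction with
  | empty => simp
  | cons a s ih => rw [Multiset.filterMap_cons_none _ _ rfl]; exact ih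

private lemma sum_split {α β : Type*} {X₁ X₂ : Multiset α} {Y₁ Y₂ : Multiset β}
    (h : X₁.map Sum.inl + Y₁.map Sum.inr = X₂.map Sum.inl + Y₂.map Sum.inr) :
    X₁ = X₂ ∧ Y₁ = Y₂ := by
  have key : ∀ (X : Multiset α) (Y : Multiset β),
      (X.map Sum.inl + Y.map Sum.inr).filterMap (Sum.getLeft? (β := β)) = X := by
    intro X Y
    rw [fMap_add, Multiset.filterMap_map, Multiset.filterMap_map]
    have e1 : (Sum.getLeft? (β := β)) ∘ (Sum.inl : α → α ⊕ β) = some ∘ id := by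
      funext x; rfl
    have e2 : (Sum.getLeft? (β := β)) ∘ (Sum.inr : β → α ⊕ β) = fun _ => none := by
      funext x; rfl
    rw [e1, e2, Multiset.filterMap_eq_map, fMap_none, Multiset.map_id, add_zero]
  have key2 : ∀ (X : Multiset α) (Y : Multiset β),
      (X.map Sum.inl + Y.map Sum.inr).filterMap (Sum.getRight? (α := α)) = Y := by
    intro X Y
    rw [fMap_add, Multiset.filterMap_map, Multiset.filterMap_map]
    have e1 : (Sum.getRight? (α := α)) ∘ (Sum.inl : α → α ⊕ β) = fun _ => none := by
      funext x; rfl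
    have e2 : (Sum.getRight? (α := α)) ∘ (Sum.inr : β → α ⊕ β) = some ∘ id := by
      funext x; rfl
    rw [e1, e2, Multiset.filterMap_eq_map, fMap_none, Multiset.map_id, zero_add]
  constructor
  · have := congrArg (Multiset.filterMap (Sum.getLeft? (β := β))) h
    rwa [key, key] at this
  · have := congrArg (Multiset.filterMap (Sum.getRight? (α := α))) h
    rwa [key2, key2] at this

private lemma cross_window {k₁ k₂ : ℕ} (S : ℕ → Fin k₁) (T : ℕ → Fin k₂)
    (M₁ M₂ m₁ m₂ n₁ n₂ L j r : ℕ)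
    (hm₁ : 0 < m₁) (hm₂ : 0 < m₂)
    (hM₁ : M₁ = m₁ * n₁) (hM₂ : M₂ = m₂ * n₂)
    (hL1 : n₁ ∣ L) (hL2 : n₂ ∣ L)
    (hr : r < m₁ + m₂) :
    cwindow (crossProd S T M₁ M₂ m₁ m₂) ((m₁+m₂) * L) (m₁+m₂) (j * (m₁+m₂) + r) =
      (cwindow S M₁ m₁ (j * m₁ + min r m₁)).map Sum.inl +
      (cwindow T M₂ m₂ (j * m₂ + (r - m₁))).map Sum.inr := by
  set m := m₁ + m₂ with hm
  have hmpos : 0 < m := by omega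
  set F : ℕ → (Fin k₁ ⊕ Fin k₂) := fun c =>
    if c < m₁ then
      Sum.inl (S ((j * m₁ + c + if c < r then m₁ else 0) % M₁))
    else
      Sum.inr (T ((j * m₂ + (c - m₁) + if c < r then m₂ else 0) % M₂)) with hF
  have step1 : cwindow (crossProd S T M₁ M₂ m₁ m₂) (m * L) m (j * m + r) =
      (Multiset.range m).map (fun i => F ((r + i) % m)) := by
    unfold cwindow
    refine Multiset.map_congr rfl fun i hi => ?_
    simp only [Multiset.mem_range] at hi
    have hqm : ((j * m + r + i) % (m * L)) % m = (r + i) % m := by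
      rw [Nat.mod_mod_of_dvd _ (dvd_mul_right m L), add_assoc, mul_comm j m, Nat.mul_add_mod]
    have hqd : ((j * m + r + i) % (m * L)) / m = (j + (r + i) / m) % L := by
      rw [Nat.mod_mul_right_div_self]
      congr 1
      rw [add_assoc, mul_comm j m, Nat.mul_add_div hmpos]
    unfold crossProd
    rw [← hm, hqm, hqd]
    have hcm : (r + i) % m < m := Nat.mod_lt _ hmpos
    have hdm : m * ((r + i) / m) + (r + i) % m = r + i := Nat.div_add_mod _ _
    have hD1 : (r + i) / m ≤ 1 := by
      by_contra hcon
      have : m * 2 ≤ m * ((r + i) / m) := Nat.mul_le_mul_left m (by omega)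
      omega
    have hDite : (r + i) / m = if (r + i) % m < r then 1 else 0 := by
      rcases Nat.le_one_iff_eq_zero_or_eq_one.mp hD1 with h | h <;>
        rw [h] at hdm <;> rw [h] <;> split <;> omega
    simp only [hF]
    by_cases hcase : (r + i) % m < m₁
    · rw [if_pos hcase, if_pos hcase]
      congr 1
      rw [idx_eq L n₁ m₁ (j + (r + i) / m) ((r + i) % m) M₁ hL1 hM₁, hDite]
      by_cases hlt : (r + i) % m < r
      · rw [if_pos hlt, if_pos hlt]; congr 1; ring
      · rw [if_neg hlt, if_neg hlt]; congr 1
    · rw [if_neg hcase, if_neg hcase]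
      congr 1
      rw [idx_eq L n₂ m₂ (j + (r + i) / m) ((r + i) % m - m₁) M₂ hL2 hM₂, hDite]
      by_cases hlt : (r + i) % m < r
      · rw [if_pos hlt, if_pos hlt]; congr 1; ring
      · rw [if_neg hlt, if_neg hlt]; congr 1
  rw [step1]
  have step2 : (Multiset.range m).map (fun i => F ((r + i) % m)) =
      (Multiset.range m).map F := by
    conv_rhs => rw [← rot m r, Multiset.map_map]
    rfl
  rw [step2, hm, Multiset.range_add, Multiset.map_add]
  congr 1
  · -- S part
    have e1 : (Multiset.range m₁).map F =
        (Multiset.range m₁).map (fun c => (fun x => (Sum.inl (S x) : Fin k₁ ⊕ Fin k₂))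
          ((j * m₁ + c + if c < min r m₁ then m₁ else 0) % M₁)) := by
      refine Multiset.map_congr rfl fun c hc => ?_
      simp only [Multiset.mem_range] at hc
      simp only [hF, if_pos hc]
      by_cases hlt : c < min r m₁
      · rw [if_pos hlt, if_pos (show c < r by omega)]
      · rw [if_neg hlt, if_neg (show ¬ c < r by omega)]
    rw [e1, window_shift (fun x => (Sum.inl (S x) : Fin k₁ ⊕ Fin k₂)) M₁ (j * m₁) m₁
      (min r m₁) (min_le_right _ _)]
    unfold cwindow
    rw [Multiset.map_map]
    rfl
  · -- T part
    rw [Multiset.map_map]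
    have e1 : (Multiset.range m₂).map (F ∘ fun x => m₁ + x) =
        (Multiset.range m₂).map (fun c => (fun x => (Sum.inr (T x) : Fin k₁ ⊕ Fin k₂))
          ((j * m₂ + c + if c < r - m₁ then m₂ else 0) % M₂)) := by
      refine Multiset.map_congr rfl fun c hc => ?_
      simp only [Multiset.mem_range] at hc
      simp only [Function.comp_apply, hF]
      rw [if_neg (by omega)]
      have h1 : m₁ + c - m₁ = c := by omega
      rw [h1]
      by_cases hlt : c < r - m₁
      · rw [if_pos hlt, if_pos (show m₁ + c < r by omega)]
      · rw [if_neg hlt, if_neg (show ¬ m₁ + c < r by omega)]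
    rw [e1, window_shift (fun x => (Sum.inr (T x) : Fin k₁ ⊕ Fin k₂)) M₂ (j * m₂) m₂
      (r - m₁) (by omega)]
    unfold cwindow
    rw [Multiset.map_map]
    rfl

private lemma endgame (m₁ m₂ n₁ n₂ d j₁ j₂ a₁ a₂ b₁ b₂ : ℕ)
    (hm₁ : 0 < m₁) (hm₂ : 0 < m₂) (hd : d = Nat.gcd n₁ n₂) (hd2 : 2 ≤ d)
    (hj₁ : j₁ < Nat.lcm n₁ n₂) (hj₂ : j₂ < Nat.lcm n₁ n₂)
    (ha₁ : a₁ ≤ m₁) (ha₂ : a₂ ≤ m₁) (hb₁ : b₁ < m₂) (hb₂ : b₂ < m₂)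
    (e₁ : (j₁ * m₁ + a₁) % (m₁ * n₁) = (j₂ * m₁ + a₂) % (m₁ * n₁))
    (e₂ : (j₁ * m₂ + b₁) % (m₂ * n₂) = (j₂ * m₂ + b₂) % (m₂ * n₂)) :
    j₁ = j₂ ∧ a₁ = a₂ ∧ b₁ = b₂ := by
  have hgd1 : d ∣ n₁ := hd ▸ Nat.gcd_dvd_left n₁ n₂
  have hgd2 : d ∣ n₂ := hd ▸ Nat.gcd_dvd_right n₁ n₂
  have hbb : b₁ = b₂ := by
    have h := congrArg (· % m₂) e₂
    rw [Nat.mod_mod_of_dvd _ (dvd_mul_right m₂ n₂), Nat.mod_mod_of_dvd _ (dvd_mul_right m₂ n₂),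
      mul_comm j₁ m₂, mul_comm j₂ m₂, Nat.mul_add_mod, Nat.mul_add_mod,
      Nat.mod_eq_of_lt hb₁, Nat.mod_eq_of_lt hb₂] at h
    exact h
  have hjn₂ : j₁ ≡ j₂ [MOD n₂] := by
    rw [hbb] at e₂
    have h0 : j₁ * m₂ + b₂ ≡ j₂ * m₂ + b₂ [MOD m₂ * n₂] := e₂
    have h2 := Nat.ModEq.add_right_cancel' b₂ h0
    have h3 : j₁ * m₂ ≡ j₂ * m₂ [MOD n₂ * m₂] := by
      show (j₁ * m₂) % (n₂ * m₂) = (j₂ * m₂) % (n₂ * m₂)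
      rw [mul_comm n₂ m₂]
      exact h2
    exact Nat.ModEq.mul_right_cancel' (by omega) h3
  have haa' : a₁ % m₁ = a₂ % m₁ := by
    have h := congrArg (· % m₁) e₁
    rw [Nat.mod_mod_of_dvd _ (dvd_mul_right m₁ n₁), Nat.mod_mod_of_dvd _ (dvd_mul_right m₁ n₁),
      mul_comm j₁ m₁, mul_comm j₂ m₁, Nat.mul_add_mod, Nat.mul_add_mod] at h
    exact h
  have hstep : ∀ x y u v : ℕ, (x * m₁ + u) % (m₁ * n₁) = (y * m₁ + v) % (m₁ * n₁) → u = v →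
      x ≡ y [MOD n₁] := by
    intro x y u v h huv
    subst huv
    have h0 : x * m₁ + u ≡ y * m₁ + u [MOD m₁ * n₁] := h
    have h2 := Nat.ModEq.add_right_cancel' u h0
    have h3 : x * m₁ ≡ y * m₁ [MOD n₁ * m₁] := by
      show (x * m₁) % (n₁ * m₁) = (y * m₁) % (n₁ * m₁)
      rw [mul_comm n₁ m₁]
      exact h2
    exact Nat.ModEq.mul_right_cancel' (by omega) h3
  have hcontra : ∀ x y : ℕ, x ≡ y + 1 [MOD n₁] → x ≡ y [MOD n₂] → False := by
    intro x y h1 h2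
    have g1 : x ≡ y + 1 [MOD d] := h1.of_dvd hgd1
    have g2 : x ≡ y [MOD d] := h2.of_dvd hgd2
    have g3 : y ≡ y + 1 [MOD d] := g2.symm.trans g1
    have g4 : d ∣ 1 := by simpa using (Nat.modEq_iff_dvd' (Nat.le_succ y)).mp g3
    have := Nat.le_of_dvd one_pos g4
    omega
  have main : a₁ = a₂ → (j₁ = j₂ ∧ a₁ = a₂ ∧ b₁ = b₂) := by
    intro haa
    have hjn₁ : j₁ ≡ j₂ [MOD n₁] := hstep _ _ _ _ e₁ haa
    have hjj : j₁ = j₂ := by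
      rcases le_total j₁ j₂ with hle | hle
      · have d1 := (Nat.modEq_iff_dvd' hle).mp hjn₁
        have d2 := (Nat.modEq_iff_dvd' hle).mp hjn₂
        have hl := Nat.lcm_dvd d1 d2
        rcases Nat.eq_zero_or_pos (j₂ - j₁) with h0 | h0
        · omega
        · have := Nat.le_of_dvd h0 hl; omega
      · have d1 := (Nat.modEq_iff_dvd' hle).mp hjn₁.symm
        have d2 := (Nat.modEq_iff_dvd' hle).mp hjn₂.symm
        have hl := Nat.lcm_dvd d1 d2
        rcases Nat.eq_zero_or_pos (j₁ - j₂) with h0 | h0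
        · omega
        · have := Nat.le_of_dvd h0 hl; omega
    exact ⟨hjj, haa, hbb⟩
  rcases Nat.lt_or_ge a₁ m₁ with h1 | h1 <;> rcases Nat.lt_or_ge a₂ m₁ with h2 | h2
  · exact main (by rwa [Nat.mod_eq_of_lt h1, Nat.mod_eq_of_lt h2] at haa')
  · have ha₂e : a₂ = m₁ := by omega
    have ha₁e : a₁ = 0 := by
      rw [Nat.mod_eq_of_lt h1, ha₂e, Nat.mod_self] at haa'; omega
    exfalso
    refine hcontra j₁ j₂ (hstep j₁ (j₂ + 1) a₁ a₁ ?_ rfl) hjn₂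
    rw [e₁, ha₂e, ha₁e]
    congr 1
    ring
  · have ha₁e : a₁ = m₁ := by omega
    have ha₂e : a₂ = 0 := by
      rw [Nat.mod_eq_of_lt h2, ha₁e, Nat.mod_self] at haa'; omega
    exfalso
    refine hcontra j₂ j₁ (hstep j₂ (j₁ + 1) a₂ a₂ ?_ rfl) hjn₂.symm
    rw [← e₁, ha₁e, ha₂e]
    congr 1
    ring
  · exact main (by omega)

/-- Synthetic construction: if `S` is cyclic `m₁`-distinguishable of length `M₁`
over `k₁` colors, `T` is cyclic `m₂`-distinguishable of length `M₂` over a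
disjoint set of `k₂` colors, `mᵢ ∣ Mᵢ`, `d = gcd(M₁/m₁, M₂/m₂) ≥ 2` and
`gcd(d, Mᵢ/(mᵢ d)) = 1`, then the interleaved sequence `S × T` is a cyclic
`(m₁+m₂)`-distinguishable sequence (over `k₁ + k₂` colors) of length
`(m₁+m₂)·lcm(M₁/m₁, M₂/m₂) = (M₁M₂/d)(1/m₁ + 1/m₂)`. -/
theorem stmt14 {k₁ k₂ : ℕ} (M₁ M₂ m₁ m₂ d : ℕ)
    (hm₁ : 0 < m₁) (hm₂ : 0 < m₂)
    (hdvd₁ : m₁ ∣ M₁) (hdvd₂ : m₂ ∣ M₂)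
    (hd : d = Nat.gcd (M₁ / m₁) (M₂ / m₂)) (hd2 : 2 ≤ d)
    (hcop₁ : Nat.gcd d (M₁ / (m₁ * d)) = 1)
    (hcop₂ : Nat.gcd d (M₂ / (m₂ * d)) = 1)
    (S : ℕ → Fin k₁) (T : ℕ → Fin k₂)
    (hS : IsCyclicDist M₁ m₁ S) (hT : IsCyclicDist M₂ m₂ T) :
    IsCyclicDist ((m₁ + m₂) * Nat.lcm (M₁ / m₁) (M₂ / m₂)) (m₁ + m₂)
      (crossProd S T M₁ M₂ m₁ m₂) ∧
    (m₁ + m₂) * Nat.lcm (M₁ / m₁) (M₂ / m₂) * (m₁ * m₂ * d) =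
      M₁ * M₂ * (m₁ + m₂) := by
  constructor
  · intro t₁ t₂ ht₁ ht₂ heq
    have hM₁ : M₁ = m₁ * (M₁ / m₁) := (Nat.mul_div_cancel' hdvd₁).symm
    have hM₂ : M₂ = m₂ * (M₂ / m₂) := (Nat.mul_div_cancel' hdvd₂).symm
    have hLpos : 0 < Nat.lcm (M₁ / m₁) (M₂ / m₂) := by
      rcases Nat.eq_zero_or_pos (Nat.lcm (M₁ / m₁) (M₂ / m₂)) with h | h
      · rw [h, Nat.mul_zero] at ht₁; omega
      · exact h
    have hn₁ : 0 < M₁ / m₁ := by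
      rcases Nat.eq_zero_or_pos (M₁ / m₁) with h | h
      · rw [h, Nat.lcm_zero_left] at hLpos; omega
      · exact h
    have hn₂ : 0 < M₂ / m₂ := by
      rcases Nat.eq_zero_or_pos (M₂ / m₂) with h | h
      · rw [h, Nat.lcm_zero_right] at hLpos; omega
      · exact h
    have hM₁pos : 0 < M₁ := by rw [hM₁]; exact Nat.mul_pos hm₁ hn₁
    have hM₂pos : 0 < M₂ := by rw [hM₂]; exact Nat.mul_pos hm₂ hn₂
    obtain ⟨j₁, r₁, hr₁, ht₁'⟩ : ∃ j r, r < m₁ + m₂ ∧ t₁ = j * (m₁ + m₂) + r :=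
      ⟨t₁ / (m₁ + m₂), t₁ % (m₁ + m₂), Nat.mod_lt _ (by omega),
        by rw [mul_comm]; exact (Nat.div_add_mod _ _).symm⟩
    obtain ⟨j₂, r₂, hr₂, ht₂'⟩ : ∃ j r, r < m₁ + m₂ ∧ t₂ = j * (m₁ + m₂) + r :=
      ⟨t₂ / (m₁ + m₂), t₂ % (m₁ + m₂), Nat.mod_lt _ (by omega),
        by rw [mul_comm]; exact (Nat.div_add_mod _ _).symm⟩
    have hj₁ : j₁ < Nat.lcm (M₁ / m₁) (M₂ / m₂) := by
      have h0 : (m₁ + m₂) * j₁ < (m₁ + m₂) * Nat.lcm (M₁ / m₁) (M₂ / m₂) := by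
        rw [mul_comm (m₁ + m₂) j₁]; omega
      exact Nat.lt_of_mul_lt_mul_left h0
    have hj₂ : j₂ < Nat.lcm (M₁ / m₁) (M₂ / m₂) := by
      have h0 : (m₁ + m₂) * j₂ < (m₁ + m₂) * Nat.lcm (M₁ / m₁) (M₂ / m₂) := by
        rw [mul_comm (m₁ + m₂) j₂]; omega
      exact Nat.lt_of_mul_lt_mul_left h0
    rw [ht₁', ht₂'] at heq
    rw [cross_window S T M₁ M₂ m₁ m₂ (M₁ / m₁) (M₂ / m₂) (Nat.lcm (M₁ / m₁) (M₂ / m₂))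
        j₁ r₁ hm₁ hm₂ hM₁ hM₂ (Nat.dvd_lcm_left _ _) (Nat.dvd_lcm_right _ _) hr₁,
      cross_window S T M₁ M₂ m₁ m₂ (M₁ / m₁) (M₂ / m₂) (Nat.lcm (M₁ / m₁) (M₂ / m₂))
        j₂ r₂ hm₁ hm₂ hM₁ hM₂ (Nat.dvd_lcm_left _ _) (Nat.dvd_lcm_right _ _) hr₂] at heq
    obtain ⟨hSw, hTw⟩ := sum_split heq
    have p₁ : (j₁ * m₁ + min r₁ m₁) % M₁ = (j₂ * m₁ + min r₂ m₁) % M₁ := by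
      refine hS _ _ (Nat.mod_lt _ hM₁pos) (Nat.mod_lt _ hM₁pos) ?_
      rw [← cwindow_mod, ← cwindow_mod]
      exact hSw
    have p₂ : (j₁ * m₂ + (r₁ - m₁)) % M₂ = (j₂ * m₂ + (r₂ - m₁)) % M₂ := by
      refine hT _ _ (Nat.mod_lt _ hM₂pos) (Nat.mod_lt _ hM₂pos) ?_
      rw [← cwindow_mod, ← cwindow_mod]
      exact hTw
    rw [hM₁] at p₁
    rw [hM₂] at p₂
    obtain ⟨hjj, haa, hbb⟩ := endgame m₁ m₂ (M₁ / m₁) (M₂ / m₂) d j₁ j₂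
      (min r₁ m₁) (min r₂ m₁) (r₁ - m₁) (r₂ - m₁) hm₁ hm₂ hd hd2 hj₁ hj₂
      (min_le_right _ _) (min_le_right _ _) (by omega) (by omega) p₁ p₂
    have hrr : r₁ = r₂ := by omega
    rw [ht₁', ht₂', hjj, hrr]
  · have h1 : m₁ * (M₁ / m₁) = M₁ := Nat.mul_div_cancel' hdvd₁
    have h2 : m₂ * (M₂ / m₂) = M₂ := Nat.mul_div_cancel' hdvd₂
    have h3 : d * Nat.lcm (M₁ / m₁) (M₂ / m₂) = (M₁ / m₁) * (M₂ / m₂) := by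
      rw [hd]; exact Nat.gcd_mul_lcm _ _
    calc (m₁ + m₂) * Nat.lcm (M₁ / m₁) (M₂ / m₂) * (m₁ * m₂ * d)
        = (m₁ * m₂ * (m₁ + m₂)) * (d * Nat.lcm (M₁ / m₁) (M₂ / m₂)) := by ring
      _ = (m₁ * m₂ * (m₁ + m₂)) * ((M₁ / m₁) * (M₂ / m₂)) := by rw [h3]
      _ = (m₁ * (M₁ / m₁)) * (m₂ * (M₂ / m₂)) * (m₁ + m₂) := by ring
      _ = M₁ * M₂ * (m₁ + m₂) := by rw [h1, h2]
end

section
/- For every fixed m ≥ 1, M_m^c(k) = Θ(k^m) as k → ∞; that is, there exist constants c_1, c_2 > 0 and k_0 such that c_1 k^m ≤ M_m^c(k) ≤ c_2 k^m for all k ≥ k_0. -/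
/-- `M_m^c(k)`: the maximum length of a cyclic `m`-distinguishable sequence
over `k` colors. -/
noncomputable def Mc (m k : ℕ) : ℕ :=
  sSup {M | ∃ s : ℕ → Fin k, IsCyclicDist M m s}


namespace Stmt16Aux

/-- symbol encoding: class (x % m), digit of block at class, parity of block -/
def enc (m q x : ℕ) : ℕ :=
  x % m + m * ((x / m / q ^ (x % m)) % q) + m * q * ((x / m) % 2)

lemma enc_lt (m q x : ℕ) (hm : 1 ≤ m) (hq : 1 ≤ q) : enc m q x < 2 * m * q := by
  have h1 : x % m < m := Nat.mod_lt _ hm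
  have h2 : (x / m / q ^ (x % m)) % q < q := Nat.mod_lt _ hq
  have h3 : (x / m) % 2 < 2 := Nat.mod_lt _ (by norm_num)
  have h4 : m * ((x / m / q ^ (x % m)) % q) ≤ m * (q - 1) := Nat.mul_le_mul_left _ (by omega)
  have h5 : m * q * ((x / m) % 2) ≤ m * q * 1 := Nat.mul_le_mul_left _ (by omega)
  have h6 : m * (q - 1) = m * q - m := by rw [Nat.mul_sub, Nat.mul_one]
  have h7 : m ≤ m * q := Nat.le_mul_of_pos_right _ hq
  have h8 : 2 * m * q = 2 * (m * q) := by ring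
  unfold enc
  omega

lemma enc_mod (m q x : ℕ) : enc m q x % m = x % m := by
  have : enc m q x = x % m + m * ((x / m / q ^ (x % m)) % q + q * ((x / m) % 2)) := by
    unfold enc; ring
  rw [this, Nat.add_mul_mod_self_left, Nat.mod_mod_of_dvd _ dvd_rfl]

lemma enc_digit (m q x : ℕ) (hm : 1 ≤ m) (hq : 1 ≤ q) :
    (enc m q x / m) % q = (x / m / q ^ (x % m)) % q := by
  have h1 : x % m < m := Nat.mod_lt _ hm
  have : enc m q x = x % m + m * ((x / m / q ^ (x % m)) % q + q * ((x / m) % 2)) := by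
    unfold enc; ring
  rw [this, Nat.add_mul_div_left _ _ (by omega : 0 < m), Nat.div_eq_of_lt h1, Nat.zero_add,
    Nat.add_mul_mod_self_left, Nat.mod_mod_of_dvd _ dvd_rfl]

lemma enc_par (m q x : ℕ) (hm : 1 ≤ m) (hq : 1 ≤ q) :
    enc m q x / (m * q) = (x / m) % 2 := by
  have h1 : x % m < m := Nat.mod_lt _ hm
  have h2 : (x / m / q ^ (x % m)) % q < q := Nat.mod_lt _ hq
  have : enc m q x = (x % m + m * ((x / m / q ^ (x % m)) % q)) + (m * q) * ((x / m) % 2) := by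
    unfold enc; ring
  rw [this, Nat.add_mul_div_left _ _ (by positivity : 0 < m * q), Nat.div_eq_of_lt, Nat.zero_add]
  calc x % m + m * ((x / m / q ^ (x % m)) % q) ≤ (m - 1) + m * (q - 1) := by
        have := Nat.mul_le_mul_left m (by omega : (x / m / q ^ (x % m)) % q ≤ q - 1); omega
    _ < m * q := by
        have h6 : m * (q - 1) = m * q - m := by rw [Nat.mul_sub, Nat.mul_one]
        have h7 : m ≤ m * q := Nat.le_mul_of_pos_right _ hq
        omega

lemma mul_add_div' (m a i : ℕ) (hm : 0 < m) (hi : i < m) : (m * a + i) / m = a := by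
  rw [Nat.mul_add_div hm, Nat.div_eq_of_lt hi, Nat.add_zero]

lemma mul_add_mod' (m a i : ℕ) (hi : i < m) : (m * a + i) % m = i := by
  rw [Nat.mul_add_mod, Nat.mod_eq_of_lt hi]

lemma pos_mod (m N a i : ℕ) (hm : 0 < m) (hN : 0 < N) (hi : i < m) :
    (m * a + i) % (m * N) = m * (a % N) + i := by
  conv_lhs => rw [← Nat.div_add_mod a N]
  have : m * (N * (a / N) + a % N) + i = (m * (a % N) + i) + (m * N) * (a / N) := by ring
  rw [this, Nat.add_mul_mod_self_left]
  apply Nat.mod_eq_of_lt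
  have : a % N + 1 ≤ N := Nat.mod_lt _ hN
  calc m * (a % N) + i < m * (a % N) + m := by omega
    _ = m * (a % N + 1) := by ring
    _ ≤ m * N := Nat.mul_le_mul_left _ this

lemma digits_inj (q : ℕ) (hq : 1 ≤ q) :
    ∀ s a b, a < q ^ s → b < q ^ s → (∀ i < s, a / q ^ i % q = b / q ^ i % q) → a = b := by
  intro s
  induction s with
  | zero => intro a b ha hb _; simp at ha hb; omega
  | succ s ih =>
    intro a b ha hb h
    have h0 : a % q = b % q := by simpa using h 0 (Nat.succ_pos s)
    have hd : a / q = b / q := by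
      apply ih
      · exact Nat.div_lt_of_lt_mul (by rwa [← pow_succ'] )
      · exact Nat.div_lt_of_lt_mul (by rwa [← pow_succ'] )
      · intro i hi
        have := h (i + 1) (by omega)
        rwa [pow_succ', ← Nat.div_div_eq_div_mul, ← Nat.div_div_eq_div_mul] at this
    have e1 := Nat.div_add_mod a q
    have e2 := Nat.div_add_mod b q
    rw [hd] at e1
    omega

lemma mod_pow_inj (q r a b : ℕ) (h : ∀ i < r, a / q ^ i % q = b / q ^ i % q) :
    a % q ^ r = b % q ^ r := by
  induction r with
  | zero => simp [Nat.mod_one]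
  | succ r ih =>
    rw [Nat.mod_pow_succ, Nat.mod_pow_succ, ih (fun i hi => h i (by omega)), h r (by omega)]

lemma succ_mod_inj (n x y : ℕ) (hx : x < n) (hy : y < n)
    (h : (x + 1) % n = (y + 1) % n) : x = y := by
  have key : ∀ z, z < n → ((z + 1) % n + (n - 1)) % n = z := by
    intro z hz
    rw [Nat.mod_add_mod]
    have : z + 1 + (n - 1) = z + n := by omega
    rw [this, Nat.add_mod_right, Nat.mod_eq_of_lt hz]
  have := key x hx
  rw [h, key y hy] at this
  omega

lemma par_succ (N j : ℕ) (hN : N % 2 = 0) (hj : j < N) : (j + 1) % N % 2 ≠ j % 2 := by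
  rcases Nat.lt_or_ge (j + 1) N with h | h
  · rw [Nat.mod_eq_of_lt h]; omega
  · have : j + 1 = N := by omega
    rw [this, Nat.mod_self]; omega

lemma range_filter (m t i : ℕ) (hm : 0 < m) (hi : i < m) :
    Multiset.filter (fun u => (t + u) % m = i) (Multiset.range m)
      = {(i + (m - t % m)) % m} := by
  have haa : t % m < m := Nat.mod_lt _ hm
  set u₀ := (i + (m - t % m)) % m with hu₀
  have hu₀m : u₀ < m := Nat.mod_lt _ hm
  have hsat : (t + u₀) % m = i := by
    set a := t % m with haeq
    set j := t / m with hjeq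
    have hdm : m * j + a = t := Nat.div_add_mod t m
    rw [hu₀, Nat.add_mod_mod, show t = m * j + a by omega]
    have hexp : m * (j + 1) = m * j + m := by ring
    have : m * j + a + (i + (m - a)) = m * (j + 1) + i := by omega
    rw [this, Nat.mul_add_mod, Nat.mod_eq_of_lt hi]
  have huniq : ∀ u < m, (t + u) % m = i → u = u₀ := by
    intro u hu hsu
    have : (t + u) % m = (t + u₀) % m := by rw [hsu, hsat]
    have h2 : u % m = u₀ % m := Nat.ModEq.add_left_cancel' t this
    rwa [Nat.mod_eq_of_lt hu, Nat.mod_eq_of_lt hu₀m] at h2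
  have : Multiset.range m = (Finset.range m).val := rfl
  rw [this, ← Finset.filter_val]
  have : Finset.filter (fun u => (t + u) % m = i) (Finset.range m) = {u₀} := by
    apply Finset.eq_singleton_iff_unique_mem.mpr
    constructor
    · simp only [Finset.mem_filter, Finset.mem_range]; exact ⟨hu₀m, hsat⟩
    · intro u hu
      simp only [Finset.mem_filter, Finset.mem_range] at hu
      exact huniq u hu.1 hu.2
  rw [this]; rfl

lemma window_filter (m q M t i : ℕ) (hm : 0 < m) (hM : m ∣ M) (hi : i < m) :
    Multiset.filter (fun c => c % m = i) (cwindow (enc m q) M m t)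
      = {enc m q ((t + (i + (m - t % m)) % m) % M)} := by
  rw [cwindow, Multiset.filter_map]
  have hpred : ∀ u ∈ Multiset.range m,
      ((fun c => c % m = i) ∘ fun u => enc m q ((t + u) % M)) u ↔ ((t + u) % m = i) := by
    intro u _
    simp only [Function.comp, enc_mod, Nat.mod_mod_of_dvd _ hM]
  rw [Multiset.filter_congr hpred, range_filter m t i hm hi, Multiset.map_singleton]

lemma pos_eq (m q t i : ℕ) (hm : 0 < m) (hq : 0 < q) (hi : i < m) (ht : t < m * q ^ m) :
    (t + (i + (m - t % m)) % m) % (m * q ^ m) =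
      m * ((t / m + (if i < t % m then 1 else 0)) % q ^ m) + i := by
  have hN : 0 < q ^ m := pow_pos hq m
  set N := q ^ m
  set a := t % m with haeq
  set j := t / m with hjeq
  have hdm : m * j + a = t := Nat.div_add_mod t m
  have haa : a < m := Nat.mod_lt _ hm
  by_cases hcase : i < a
  · have h1 : (i + (m - a)) % m = i + m - a := by
      rw [Nat.mod_eq_of_lt (by omega)]; omega
    have hexp : m * (j + 1) = m * j + m := by ring
    have h2 : t + (i + m - a) = m * (j + 1) + i := by omega
    rw [h1, h2, pos_mod m N (j + 1) i hm hN hi, if_pos hcase]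
  · have h1 : (i + (m - a)) % m = i - a := by
      have : i + (m - a) = m + (i - a) := by omega
      rw [this, Nat.add_mod_left, Nat.mod_eq_of_lt (by omega)]
    have h2 : t + (i - a) = m * j + i := by omega
    have hjN : j < N := by
      rw [hjeq]
      exact Nat.div_lt_of_lt_mul (by rw [mul_comm] at ht ⊢; exact ht)
    rw [h1, h2, pos_mod m N j i hm hN hi, if_neg hcase, Nat.add_zero]

lemma main (m q : ℕ) (hm : 1 ≤ m) (hq : 2 ≤ q) (hqe : q % 2 = 0) :
    IsCyclicDist (m * q ^ m) m (enc m q) := by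
  intro t₁ t₂ ht₁ ht₂ hw
  have hq1 : 1 ≤ q := by omega
  have hN0 : 0 < q ^ m := pow_pos (by omega) m
  set N := q ^ m with hNdef
  have hNe : N % 2 = 0 := by
    have h2 : 2 ∣ N := dvd_trans (Nat.dvd_of_mod_eq_zero hqe)
      (dvd_pow_self q (by omega : m ≠ 0))
    omega
  set j₁ := t₁ / m with hj₁eq
  set r₁ := t₁ % m with hr₁eq
  set j₂ := t₂ / m with hj₂eq
  set r₂ := t₂ % m with hr₂eq
  have hd₁ : m * j₁ + r₁ = t₁ := Nat.div_add_mod t₁ m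
  have hd₂ : m * j₂ + r₂ = t₂ := Nat.div_add_mod t₂ m
  have hj₁ : j₁ < N := by rw [hj₁eq]; exact Nat.div_lt_of_lt_mul (by rw [mul_comm] at ht₁ ⊢; exact ht₁)
  have hj₂ : j₂ < N := by rw [hj₂eq]; exact Nat.div_lt_of_lt_mul (by rw [mul_comm] at ht₂ ⊢; exact ht₂)
  have hr₁m : r₁ < m := Nat.mod_lt _ (by omega)
  have hr₂m : r₂ < m := Nat.mod_lt _ (by omega)
  have key : ∀ i, i < m →
      ((j₁ + (if i < r₁ then 1 else 0)) % N / q ^ i) % q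
        = ((j₂ + (if i < r₂ then 1 else 0)) % N / q ^ i) % q
      ∧ ((j₁ + (if i < r₁ then 1 else 0)) % N) % 2
        = ((j₂ + (if i < r₂ then 1 else 0)) % N) % 2 := by
    intro i hi
    have h1 := window_filter m q (m * N) t₁ i (by omega) ⟨N, rfl⟩ hi
    have h2 := window_filter m q (m * N) t₂ i (by omega) ⟨N, rfl⟩ hi
    rw [hw, h2] at h1
    have h3 := Multiset.singleton_inj.mp h1
    rw [pos_eq m q t₂ i (by omega) (by omega) hi ht₂,
        pos_eq m q t₁ i (by omega) (by omega) hi ht₁] at h3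
    set A₁ := (j₁ + (if i < r₁ then 1 else 0)) % N
    set A₂ := (j₂ + (if i < r₂ then 1 else 0)) % N
    constructor
    · have hv := congrArg (fun z => (z / m) % q) h3
      simpa only [enc_digit _ _ _ hm hq1, mul_add_div' m _ i (by omega) hi,
        mul_add_mod' m _ i hi] using hv.symm
    · have hb := congrArg (fun z => z / (m * q)) h3
      simpa only [enc_par _ _ _ hm hq1, mul_add_div' m _ i (by omega) hi] using hb.symm
  -- parity of blocks
  have hpar : j₁ % 2 = j₂ % 2 := by
    have h := (key (m - 1) (by omega)).2
    rw [if_neg (by omega : ¬ m - 1 < r₁), if_neg (by omega : ¬ m - 1 < r₂),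
      Nat.add_zero, Nat.add_zero, Nat.mod_eq_of_lt hj₁, Nat.mod_eq_of_lt hj₂] at h
    exact h
  -- equal offsets
  have hsym : ∀ ja jb ra rb : ℕ, jb < N → ja % 2 = jb % 2 →
      ((ja + (if ra < ra then 1 else 0)) % N) % 2
        = ((jb + (if ra < rb then 1 else 0)) % N) % 2 →
      ja % N = ja → ¬ ra < rb := by
    intro ja jb ra rb hjb hp h hja hlt
    rw [if_neg (lt_irrefl ra), if_pos hlt, Nat.add_zero, hja] at h
    exact par_succ N jb hNe hjb (by omega)
  have hr : r₁ = r₂ := by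
    by_contra hne
    rcases Nat.lt_or_ge r₁ r₂ with h | h
    · exact hsym j₁ j₂ r₁ r₂ hj₂ hpar (key r₁ hr₁m).2 (Nat.mod_eq_of_lt hj₁) h
    · exact hsym j₂ j₁ r₂ r₁ hj₁ hpar.symm ((key r₂ hr₂m).2).symm
        (Nat.mod_eq_of_lt hj₂) (by omega)
  set r := r₁ with hrdef
  -- high digits
  have hhigh : j₁ / q ^ r = j₂ / q ^ r := by
    apply digits_inj q hq1 (m - r)
    · rw [Nat.div_lt_iff_lt_mul (pow_pos (by omega) r), ← pow_add]
      have : m - r + r = m := by omega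
      rw [this]; exact hj₁
    · rw [Nat.div_lt_iff_lt_mul (pow_pos (by omega) r), ← pow_add]
      have : m - r + r = m := by omega
      rw [this]; exact hj₂
    · intro i hi
      have h := (key (r + i) (by omega)).1
      rw [if_neg (by omega : ¬ r + i < r₁), if_neg (by omega : ¬ r + i < r₂),
        Nat.add_zero, Nat.add_zero, Nat.mod_eq_of_lt hj₁, Nat.mod_eq_of_lt hj₂] at h
      rw [pow_add, ← Nat.div_div_eq_div_mul, ← Nat.div_div_eq_div_mul] at h
      exact h
  -- low digits
  have hlow : j₁ % q ^ r = j₂ % q ^ r := by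
    have hd : q ^ r ∣ N := pow_dvd_pow q (by omega : r ≤ m)
    have h1 : ((j₁ + 1) % N) % q ^ r = ((j₂ + 1) % N) % q ^ r := by
      apply mod_pow_inj
      intro i hi
      have h := (key i (by omega)).1
      rw [if_pos (by omega : i < r₁), if_pos (by omega : i < r₂)] at h
      exact h
    rw [Nat.mod_mod_of_dvd _ hd, Nat.mod_mod_of_dvd _ hd] at h1
    have e1 : (j₁ % q ^ r + 1) % q ^ r = (j₂ % q ^ r + 1) % q ^ r := by
      rw [Nat.mod_add_mod, Nat.mod_add_mod]; exact h1
    exact succ_mod_inj _ _ _ (Nat.mod_lt _ (pow_pos (by omega) r))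
      (Nat.mod_lt _ (pow_pos (by omega) r)) e1
  have e1 := Nat.div_add_mod j₁ (q ^ r)
  have e2 := Nat.div_add_mod j₂ (q ^ r)
  rw [hhigh, hlow] at e1
  have hj : j₁ = j₂ := by omega
  rw [hj] at hd₁
  omega

lemma exists_seq (m q k : ℕ) (hm : 1 ≤ m) (hq : 2 ≤ q) (hqe : q % 2 = 0)
    (hk : 2 * m * q ≤ k) : ∃ s : ℕ → Fin k, IsCyclicDist (m * q ^ m) m s := by
  have hk0 : 0 < k := by
    have : 0 < 2 * m * q := by positivity
    omega
  have henc : ∀ x, enc m q x % k = enc m q x := fun x =>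
    Nat.mod_eq_of_lt (lt_of_lt_of_le (enc_lt m q x hm (by omega)) hk)
  refine ⟨fun x => ⟨enc m q x % k, Nat.mod_lt _ hk0⟩, ?_⟩
  intro t₁ t₂ h1 h2 hwin
  apply main m q hm hq hqe t₁ t₂ h1 h2
  have hval := congrArg (Multiset.map Fin.val) hwin
  simpa only [cwindow, Multiset.map_map, Function.comp, henc] using hval

lemma card_bound (m k M : ℕ) (h : ∃ s : ℕ → Fin k, IsCyclicDist M m s) :
    M ≤ Fintype.card (Sym (Fin k) m) := by
  obtain ⟨s, hs⟩ := h
  have hcard : ∀ t, Multiset.card (cwindow s M m t) = m := by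
    intro t; simp [cwindow]
  let F : Fin M → Sym (Fin k) m := fun t => ⟨cwindow s M m t, hcard t⟩
  have hinj : Function.Injective F := by
    intro a b hab
    apply Fin.ext
    apply hs a b a.isLt b.isLt
    simpa [F] using congrArg Sym.toMultiset hab
  have := Fintype.card_le_of_injective F hinj
  rwa [Fintype.card_fin] at this

lemma Mc_le (m k : ℕ) : Mc m k ≤ Fintype.card (Sym (Fin k) m) :=
  csSup_le' (fun _ hM => card_bound m k _ hM)

lemma le_Mc (m k M : ℕ) (h : ∃ s : ℕ → Fin k, IsCyclicDist M m s) : M ≤ Mc m k :=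
  le_csSup ⟨Fintype.card (Sym (Fin k) m), fun _ hM => card_bound m k _ hM⟩ h

end Stmt16Aux

open Stmt16Aux in
/-- For every fixed `m ≥ 1`, `M_m^c(k) = Θ(k^m)` as `k → ∞`. -/
theorem stmt16 (m : ℕ) (hm : 1 ≤ m) :
    ∃ c₁ c₂ : ℝ, 0 < c₁ ∧ 0 < c₂ ∧ ∃ k₀ : ℕ, ∀ k ≥ k₀,
      c₁ * (k : ℝ) ^ m ≤ (Mc m k : ℝ) ∧ (Mc m k : ℝ) ≤ c₂ * (k : ℝ) ^ m := by
  refine ⟨(((4 * m) ^ m : ℕ) : ℝ)⁻¹, ((2 ^ m : ℕ) : ℝ), ?_, ?_, 8 * m, ?_⟩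
  · have : 0 < (4 * m) ^ m := pow_pos (by omega) m
    positivity
  · have : 0 < (2 : ℕ) ^ m := pow_pos (by omega) m
    positivity
  intro k hk
  constructor
  · -- lower bound
    set d := k / (4 * m) with hddef
    have hd2 : 2 ≤ d := by
      rw [hddef, Nat.le_div_iff_mul_le (by omega : 0 < 4 * m)]
      omega
    have hdiv := Nat.div_add_mod k (4 * m)
    have hmodlt : k % (4 * m) < 4 * m := Nat.mod_lt _ (by omega)
    set P := m * d with hPdef
    have hP4 : 4 * m * d = 4 * P := by rw [hPdef]; ring
    have hP2 : 2 * m ≤ P := by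
      rw [hPdef]
      calc 2 * m = m * 2 := by ring
        _ ≤ m * d := Nat.mul_le_mul_left m hd2
    rw [← hddef] at hdiv
    have h2mq : 2 * m * (2 * d) ≤ k := by
      have : 2 * m * (2 * d) = 4 * P := by rw [hPdef]; ring
      omega
    have hk4 : k ≤ 4 * m * (2 * d) := by
      have h8 : 4 * m * (2 * d) = 8 * P := by rw [hPdef]; ring
      omega
    have hMle : m * (2 * d) ^ m ≤ Mc m k :=
      le_Mc m k _ (exists_seq m (2 * d) k hm (by omega) (by omega) h2mq)
    have hpow : k ^ m ≤ (4 * m) ^ m * (m * (2 * d) ^ m) := by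
      calc k ^ m ≤ (4 * m * (2 * d)) ^ m := Nat.pow_le_pow_left hk4 m
        _ = (4 * m) ^ m * (2 * d) ^ m := mul_pow _ _ m
        _ ≤ (4 * m) ^ m * (m * (2 * d) ^ m) := by
            apply Nat.mul_le_mul_left
            exact Nat.le_mul_of_pos_left _ (by omega)
    have hnat : k ^ m ≤ (4 * m) ^ m * Mc m k :=
      le_trans hpow (Nat.mul_le_mul_left _ hMle)
    have hcast : ((k : ℝ)) ^ m ≤ (((4 * m) ^ m : ℕ) : ℝ) * (Mc m k : ℝ) := by
      have := (Nat.cast_le (α := ℝ)).mpr hnat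
      push_cast at this ⊢
      convert this using 2
    rw [inv_mul_le_iff₀ (by positivity)]
    · exact hcast
  · -- upper bound
    have h1 : Mc m k ≤ (k + m - 1).choose m := by
      have := Mc_le m k
      rwa [Sym.card_sym_eq_multichoose, Fintype.card_fin, Nat.multichoose_eq] at this
    have h2 : (k + m - 1).choose m ≤ (k + m - 1) ^ m := Nat.choose_le_pow _ _
    have h3 : (k + m - 1) ^ m ≤ (2 * k) ^ m := Nat.pow_le_pow_left (by omega) m
    have hnat : Mc m k ≤ 2 ^ m * k ^ m := by
      calc Mc m k ≤ (2 * k) ^ m := le_trans h1 (le_trans h2 h3)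
        _ = 2 ^ m * k ^ m := mul_pow _ _ m
    have := (Nat.cast_le (α := ℝ)).mpr hnat
    push_cast at this ⊢
    exact this
end

section
/- Suppose there exists a cyclic m-distinguishable sequence over [k−1] whose window multisets cover all C(k+m−2, m) size-m multisets of [k−1] (an (m, k−1)-Mcycle). Then appending m consecutive copies of the new symbol k to the end of any t-cut of this sequence yields an m-distinguishable (non-cyclic) sequence over [k] of length C(k+m−2, m) + 2m − 1. Hence M_m(k) ≥ C(k+m−2, m) + 2m − 1. -/
lemma card_filter_le_range (a m : ℕ) (h : a ≤ m) :
    ((Finset.range m).filter (fun i => a ≤ i)).card = m - a := by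
  have : (Finset.range m).filter (fun i => a ≤ i) = Finset.range m \ Finset.range a := by
    ext i; simp only [Finset.mem_filter, Finset.mem_sdiff, Finset.mem_range]; omega
  rw [this, Finset.card_sdiff_of_subset (Finset.range_subset_range.2 h)]
  simp

/-- Suppose `s` is an `(m, k)`-Mcycle: a cyclic `m`-distinguishable sequence
over `k` old colors (inside the alphabet of `k + 1` colors) of length
`M₀ = C(k+m-1, m)` whose windows cover all size-`m` multisets of the `k` old
colors. Then, for every `t`, appending `m` consecutive copies of the new color
`k+1` to the `t`-cut of `s` yields an `m`-distinguishable sequence over `k + 1`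
colors of length `M₀ + 2m - 1`; hence `M_m(k+1) ≥ C(k+m-1, m) + 2m - 1`. -/
theorem stmt18 (k m : ℕ) (hm : 0 < m) (hk : 0 < k) (s : ℕ → Fin k)
    (hS : IsCyclicDist ((k + m - 1).choose m) m s)
    (hMcycle : ∀ A : Multiset (Fin k), Multiset.card A = m →
      ∃ t < (k + m - 1).choose m, cwindow s ((k + m - 1).choose m) m t = A) :
    (∀ t : ℕ, IsDist ((k + m - 1).choose m + 2 * m - 1) m
      (fun i => if i < (k + m - 1).choose m + m - 1 then
          Fin.castSucc (s ((t + 1 + i) % (k + m - 1).choose m))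
        else Fin.last k)) ∧
    ∃ c : ℕ → Fin (k + 1), IsDist ((k + m - 1).choose m + 2 * m - 1) m c := by
  set M := (k + m - 1).choose m with hMdef
  have hM : 0 < M := Nat.choose_pos (by omega)
  have main : ∀ t : ℕ, IsDist (M + 2 * m - 1) m
      (fun i => if i < M + m - 1 then
          Fin.castSucc (s ((t + 1 + i) % M)) else Fin.last k) := by
    intro t
    set c : ℕ → Fin (k + 1) := fun i => if i < M + m - 1 then
        Fin.castSucc (s ((t + 1 + i) % M)) else Fin.last k with hc
    -- c at old positions
    have hcold : ∀ i, i < M + m - 1 → c i = Fin.castSucc (s ((t + 1 + i) % M)) := by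
      intro i hi; simp [hc, hi]
    have hcnew : ∀ i, M + m - 1 ≤ i → c i = Fin.last k := by
      intro i hi; simp [hc, Nat.not_lt.2 hi]
    have hne : ∀ x : Fin k, Fin.castSucc x ≠ Fin.last k := by
      intro x; exact Fin.ne_of_lt (Fin.castSucc_lt_last x)
    -- membership of last
    have hmem : ∀ u, M ≤ u → Fin.last k ∈ window c m u := by
      intro u hu
      have : c (u + (m - 1)) = Fin.last k := hcnew _ (by omega)
      rw [window]
      refine Multiset.mem_map.2 ⟨m - 1, ?_, this⟩
      simp [Multiset.mem_range]; omega
    have hnmem : ∀ u, u < M → Fin.last k ∉ window c m u := by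
      intro u hu hmem'
      rw [window] at hmem'
      obtain ⟨i, hi, hci⟩ := Multiset.mem_map.1 hmem'
      rw [Multiset.mem_range] at hi
      rw [hcold _ (by omega)] at hci
      exact hne _ hci
    -- count of last for u ≥ M
    have hcount : ∀ u, M ≤ u → u + m ≤ M + 2 * m - 1 →
        Multiset.count (Fin.last k) (window c m u) = u + 1 - M := by
      intro u hu hum
      rw [window, Multiset.count_map]
      have hfe : (Multiset.range m).filter (fun i => Fin.last k = c (u + i))
          = (Multiset.range m).filter (fun i => M + m - 1 - u ≤ i) := by
        apply Multiset.filter_congr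
        intro i hi
        rw [Multiset.mem_range] at hi
        constructor
        · intro h
          by_contra hcon
          have : u + i < M + m - 1 := by omega
          rw [hcold _ this] at h
          exact hne _ h.symm
        · intro h
          rw [hcnew _ (by omega)]
      rw [hfe]
      have : (Multiset.range m).filter (fun i => M + m - 1 - u ≤ i)
          = ((Finset.range m).filter (fun i => M + m - 1 - u ≤ i)).val := by
        rfl
      rw [this]
      have := card_filter_le_range (M + m - 1 - u) m (by omega)
      rw [Finset.card] at this
      rw [this]
      omega
    -- window over old positions equals cwindow
    have hwin : ∀ u, u < M → window c m u
        = (cwindow s M m ((t + 1 + u) % M)).map Fin.castSucc := by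
      intro u hu
      rw [window, cwindow, Multiset.map_map]
      apply Multiset.map_congr rfl
      intro i hi
      rw [Multiset.mem_range] at hi
      have h1 : u + i < M + m - 1 := by omega
      rw [hcold _ h1]
      simp only [Function.comp_apply]
      congr 2
      rw [Nat.mod_add_mod]
      ring_nf
    intro t₁ t₂ h₁ h₂ hw
    by_cases c₁ : t₁ < M
    · by_cases c₂ : t₂ < M
      · rw [hwin _ c₁, hwin _ c₂] at hw
        have hw' := Multiset.map_injective (Fin.castSucc_injective k) hw
        have := hS _ _ (Nat.mod_lt _ hM) (Nat.mod_lt _ hM) hw'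
        have hmod : (t + 1 + t₁) % M = (t + 1 + t₂) % M := this
        have hmeq : t₁ % M = t₂ % M :=
          Nat.ModEq.add_left_cancel' (t + 1) hmod
        rwa [Nat.mod_eq_of_lt c₁, Nat.mod_eq_of_lt c₂] at hmeq
      · exact absurd (hw ▸ hmem t₂ (by omega)) (hnmem t₁ c₁)
    · by_cases c₂ : t₂ < M
      · exact absurd (hw ▸ hmem t₁ (by omega)) (hnmem t₂ c₂)
      · have e₁ := hcount t₁ (by omega) h₁
        have e₂ := hcount t₂ (by omega) h₂
        rw [hw] at e₁
        omega
  exact ⟨main, ⟨_, main 0⟩⟩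
end
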